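/- Let $q > b \geq 1$ and $0 \leq s \leq b$ be integers. Let $\alpha^1,\ldots,\alpha^{b-s} \in \mathbb{R}^q$ be probability vectors with $\frac{1}{q-1}(1-\frac{1}{q-b}) \leq \alpha^i_j \leq \frac{1}{q-1}$ for all entries, and let $\alpha^{b-s+1},\ldots,\alpha^b$ each be a permutation of $(0,\frac{1}{q-1},\ldots,\frac{1}{q-1})$. Then $\sum_{j=1}^q \prod_{i=1}^b \alpha^i_j \geq \frac{q-s}{(q-1)^b}\left(1-\frac{1}{q-b}\right)^{(b-s) - (b-s)^2/(q-s)}$. -/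

import Mathlib

set_option maxHeartbeats 1000000 in
theorem stmt_4 (q b s : ℕ) (hb : 1 ≤ b) (hqb : b < q) (hs : s ≤ b)
    (α : Fin b → Fin q → ℝ)
    (hsum : ∀ i, ∑ j, α i j = 1)
    (hS1 : ∀ i : Fin b, (i : ℕ) < b - s →
      ∀ j, (1 / ((q : ℝ) - 1)) * (1 - 1 / ((q : ℝ) - b)) ≤ α i j ∧
        α i j ≤ 1 / ((q : ℝ) - 1))
    (hS2 : ∀ i : Fin b, b - s ≤ (i : ℕ) →
      ∃ k, α i k = 0 ∧ ∀ j, j ≠ k → α i j = 1 / ((q : ℝ) - 1)) :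
    ∑ j, ∏ i, α i j ≥
      (((q : ℝ) - s) / ((q : ℝ) - 1) ^ b) *
        (1 - 1 / ((q : ℝ) - b)) ^
          (((b : ℝ) - s) - ((b : ℝ) - s) ^ 2 / ((q : ℝ) - s)) := by
  have hq2 : 2 ≤ q := lt_of_le_of_lt hb hqb
  have hQ1 : (0:ℝ) < (q:ℝ) - 1 := by
    have : (2:ℝ) ≤ (q:ℝ) := by exact_mod_cast hq2
    linarith
  set c : ℝ := 1 / ((q:ℝ) - 1) with hc_def
  set t : ℝ := 1 - 1 / ((q:ℝ) - b) with ht_def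
  have hc : 0 < c := by rw [hc_def]; positivity
  have hQB : (1:ℝ) ≤ (q:ℝ) - b := by
    have : (b:ℝ) + 1 ≤ (q:ℝ) := by exact_mod_cast hqb
    linarith
  have hQB0 : (0:ℝ) < (q:ℝ) - b := lt_of_lt_of_le one_pos hQB
  have ht0 : 0 ≤ t := by
    have := (div_le_one hQB0).mpr hQB
    rw [ht_def]; linarith
  have ht1 : t ≤ 1 := by
    have : 0 < 1 / ((q:ℝ) - b) := by positivity
    rw [ht_def]; linarith
  have hsq : s < q := lt_of_le_of_lt hs hqb
  have hQS : (0:ℝ) < (q:ℝ) - s := by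
    have : (s:ℝ) + 1 ≤ (q:ℝ) := by exact_mod_cast hsq
    linarith
  -- nonnegativity of all entries
  have hα0 : ∀ i j, 0 ≤ α i j := by
    intro i j
    by_cases h : (i:ℕ) < b - s
    · have h1 := (hS1 i h j).1
      have : 0 ≤ c * t := mul_nonneg hc.le ht0
      linarith
    · obtain ⟨k, hk0, hk1⟩ := hS2 i (Nat.not_lt.mp h)
      by_cases hj : j = k
      · rw [hj, hk0]
      · rw [hk1 j hj]; exact hc.le
  have hq0 : 0 < q := by omega
  -- choose the zero coordinates of the S2 vectors
  have hS2' : ∀ i : Fin b, ∃ k : Fin q, b - s ≤ (i:ℕ) →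
      (α i k = 0 ∧ ∀ j, j ≠ k → α i j = c) := by
    intro i
    by_cases h : b - s ≤ (i:ℕ)
    · obtain ⟨k, hk⟩ := hS2 i h; exact ⟨k, fun _ => hk⟩
    · exact ⟨⟨0, hq0⟩, fun h' => absurd h' h⟩
  choose k hk using hS2'
  set F1 : Finset (Fin b) := Finset.univ.filter (fun i => (i:ℕ) < b - s) with hF1
  set F2 : Finset (Fin b) := Finset.univ.filter (fun i => ¬ (i:ℕ) < b - s) with hF2
  have hcF1 : F1.card = b - s := by
    rcases Nat.lt_or_ge (b - s) b with h | h
    · have : F1 = Finset.Iio (⟨b - s, h⟩ : Fin b) := by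
        ext i; simp [hF1, Fin.lt_def]
      rw [this, Fin.card_Iio]
    · have hbs : b - s = b := by omega
      have : F1 = Finset.univ := by
        ext i; simp [hF1, hbs, i.isLt]
      rw [this, Finset.card_univ, Fintype.card_fin, hbs]
  have hcF12 : F1.card + F2.card = b := by
    rw [hF1, hF2, Finset.card_filter_add_card_filter_not,
      Finset.card_univ, Fintype.card_fin]
  have hcF2 : F2.card = s := by omega
  set Z : Finset (Fin q) := F2.image k with hZ
  have hZcard : Z.card ≤ s := le_trans Finset.card_image_le (le_of_eq hcF2)
  have hKcard : q - s ≤ Zᶜ.card := by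
    rw [Finset.card_compl, Fintype.card_fin]; omega
  obtain ⟨K, hKsub, hKc⟩ := Finset.exists_subset_card_eq hKcard
  have hKα : ∀ j ∈ K, ∀ i ∈ F2, α i j = c := by
    intro j hj i hi
    have hi' : b - s ≤ (i:ℕ) := by
      have := Finset.mem_filter.mp hi
      exact Nat.not_lt.mp this.2
    have hjZ : j ∉ Z := Finset.mem_compl.mp (hKsub hj)
    have hjk : j ≠ k i := by
      intro h
      exact hjZ (h ▸ Finset.mem_image_of_mem k hi)
    exact (hk i hi').2 j hjk
  have hprodnn : ∀ j, 0 ≤ ∏ i, α i j := fun j => Finset.prod_nonneg fun i _ => hα0 i j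
  have hstep1 : ∑ j ∈ K, ∏ i, α i j ≤ ∑ j, ∏ i, α i j :=
    Finset.sum_le_sum_of_subset_of_nonneg (Finset.subset_univ K) (fun j _ _ => hprodnn j)
  have hsplit : ∀ j ∈ K, ∏ i, α i j = (∏ i ∈ F1, α i j) * c ^ s := by
    intro j hj
    rw [← Finset.prod_filter_mul_prod_filter_not Finset.univ
      (fun i : Fin b => (i:ℕ) < b - s) (fun i : Fin b => α i j)]
    congr 1
    rw [Finset.prod_congr rfl (fun i hi => hKα j hj i hi), Finset.prod_const, hcF2]
  have hKcast : (K.card : ℝ) = (q:ℝ) - s := by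
    rw [hKc, Nat.cast_sub hsq.le]
  rcases eq_or_lt_of_le hs with hsb | hsb
  · -- case s = b
    have hE : ((b:ℝ) - (s:ℝ)) - ((b:ℝ) - (s:ℝ)) ^ 2 / ((q:ℝ) - s) = 0 := by
      rw [hsb]; simp
    rw [ge_iff_le, hE, Real.rpow_zero, mul_one]
    have hF1e : F1 = ∅ := by
      rw [hF1]
      apply Finset.filter_false_of_mem
      intro i _
      omega
    have hKval : ∑ j ∈ K, ∏ i, α i j = ((q:ℝ) - s) * c ^ s := by
      rw [Finset.sum_congr rfl hsplit]
      simp only [hF1e, Finset.prod_empty, one_mul]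
      rw [Finset.sum_const, nsmul_eq_mul, hKcast]
    calc ((q:ℝ) - s) / ((q:ℝ) - 1) ^ b = ((q:ℝ) - s) * c ^ s := by
          rw [hsb, hc_def, one_div_pow]; ring
      _ = ∑ j ∈ K, ∏ i, α i j := hKval.symm
      _ ≤ ∑ j, ∏ i, α i j := hstep1
  · -- case s < b
    have hdbs : (1:ℝ) ≤ (b:ℝ) - s := by
      have : (s:ℝ) + 1 ≤ (b:ℝ) := by exact_mod_cast hsb
      linarith
    rcases eq_or_lt_of_le (Nat.succ_le_of_lt hqb) with hq1 | hq1
    · -- q = b + 1 : base t = 0, exponent positive, RHS = 0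
      have hQBe : (q:ℝ) - b = 1 := by
        have : ((b:ℝ) + 1) = (q:ℝ) := by exact_mod_cast hq1
        linarith
      have htz : t = 0 := by rw [ht_def, hQBe]; norm_num
      have hQSe : (q:ℝ) - s = ((b:ℝ) - s) + 1 := by
        have : ((b:ℝ) + 1) = (q:ℝ) := by exact_mod_cast hq1
        linarith
      have hE : ((b:ℝ) - s) - ((b:ℝ) - s) ^ 2 / ((q:ℝ) - s) ≠ 0 := by
        have h1 : ((b:ℝ) - s) ^ 2 / ((q:ℝ) - s) < (b:ℝ) - s := by
          rw [div_lt_iff₀ hQS, hQSe]; nlinarith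
        linarith
      rw [ge_iff_le, htz, Real.zero_rpow hE, mul_zero]
      exact Finset.sum_nonneg fun j _ => hprodnn j
    · -- main case : q ≥ b + 2, so t > 0
      have hQB2 : (2:ℝ) ≤ (q:ℝ) - b := by
        have : ((b:ℝ) + 2) ≤ (q:ℝ) := by exact_mod_cast hq1
        linarith
      have ht : 0 < t := by
        have : 1 / ((q:ℝ) - b) < 1 := (div_lt_one hQB0).mpr (by linarith)
        rw [ht_def]; linarith
      have h1t : 1 - t = 1 / ((q:ℝ) - b) := by rw [ht_def]; ring
      set D : ℝ := c * (1 - t) with hD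
      have hD0 : 0 < D := by
        rw [hD, h1t, hc_def]; positivity
      set x : Fin b → Fin q → ℝ := fun i j => (c - α i j) / D with hx
      have hxmem : ∀ i ∈ F1, ∀ j, 0 ≤ x i j ∧ x i j ≤ 1 := by
        intro i hi j
        have hi' : (i:ℕ) < b - s := (Finset.mem_filter.mp hi).2
        obtain ⟨h1, h2⟩ := hS1 i hi' j
        constructor
        · exact div_nonneg (by linarith) hD0.le
        · rw [div_le_one hD0, hD]; nlinarith
      have hαx : ∀ i ∈ F1, ∀ j, α i j = c - x i j * D := by
        intro i hi j
        simp only [hx]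
        rw [div_mul_cancel₀ _ hD0.ne']
        ring
      have hxsum : ∀ i ∈ F1, ∑ j, x i j = (q:ℝ) - b := by
        intro i _
        simp only [hx]
        rw [← Finset.sum_div, Finset.sum_sub_distrib, hsum i, Finset.sum_const,
          Finset.card_univ, Fintype.card_fin, nsmul_eq_mul, hD, h1t, hc_def]
        field_simp
        ring
      have hchord : ∀ i ∈ F1, ∀ j, c * Real.exp (x i j * Real.log t) ≤ α i j := by
        intro i hi j
        have hx01 := hxmem i hi j
        have key : Real.exp (x i j * Real.log t) ≤ 1 - x i j * (1 - t) := by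
          have h2 := convexOn_exp.2 (Set.mem_univ (0:ℝ)) (Set.mem_univ (Real.log t))
            (by linarith [hx01.2] : (0:ℝ) ≤ 1 - x i j) hx01.1 (by ring)
          simp only [smul_eq_mul, mul_zero, zero_add, Real.exp_zero, mul_one,
            Real.exp_log ht] at h2
          nlinarith [h2]
        rw [hαx i hi j]
        calc c * Real.exp (x i j * Real.log t) ≤ c * (1 - x i j * (1 - t)) :=
              mul_le_mul_of_nonneg_left key hc.le
          _ = c - x i j * D := by rw [hD]; ring
      set y : Fin q → ℝ := fun j => ∑ i ∈ F1, x i j with hy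
      have hynn : ∀ j, 0 ≤ y j := fun j => Finset.sum_nonneg fun i hi => (hxmem i hi j).1
      have hcbs : ((b - s : ℕ) : ℝ) = (b:ℝ) - s := Nat.cast_sub hs
      have hysum : ∑ j ∈ K, y j ≤ ((b:ℝ) - s) * ((q:ℝ) - b) := by
        calc ∑ j ∈ K, y j ≤ ∑ j, y j :=
              Finset.sum_le_sum_of_subset_of_nonneg (Finset.subset_univ K)
                (fun j _ _ => hynn j)
          _ = ∑ i ∈ F1, ∑ j, x i j := Finset.sum_comm
          _ = ∑ i ∈ F1, ((q:ℝ) - b) := Finset.sum_congr rfl hxsum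
          _ = ((b:ℝ) - s) * ((q:ℝ) - b) := by
              rw [Finset.sum_const, hcF1, nsmul_eq_mul, hcbs]
      have hprodF1 : ∀ j ∈ K, c ^ (b - s) * Real.exp (y j * Real.log t) ≤
          ∏ i ∈ F1, α i j := by
        intro j hj
        have hle : ∏ i ∈ F1, (c * Real.exp (x i j * Real.log t)) ≤ ∏ i ∈ F1, α i j :=
          Finset.prod_le_prod (fun i _ => mul_nonneg hc.le (Real.exp_nonneg _))
            (fun i hi => hchord i hi j)
        calc c ^ (b - s) * Real.exp (y j * Real.log t)
            = ∏ i ∈ F1, (c * Real.exp (x i j * Real.log t)) := by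
              rw [Finset.prod_mul_distrib, Finset.prod_const, hcF1, ← Real.exp_sum,
                ← Finset.sum_mul, hy]
          _ ≤ ∏ i ∈ F1, α i j := hle
      set zbar : ℝ := (∑ j ∈ K, y j) * Real.log t / ((q:ℝ) - s) with hzbar
      have hSyl : ∑ j ∈ K, y j * Real.log t = zbar * ((q:ℝ) - s) := by
        rw [hzbar, ← Finset.sum_mul]
        field_simp
      have hjensen : ((q:ℝ) - s) * Real.exp zbar ≤
          ∑ j ∈ K, Real.exp (y j * Real.log t) := by
        have h1 : ∀ j ∈ K, Real.exp zbar * (y j * Real.log t - zbar + 1) ≤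
            Real.exp (y j * Real.log t) := by
          intro j _
          have h2 := Real.add_one_le_exp (y j * Real.log t - zbar)
          calc Real.exp zbar * (y j * Real.log t - zbar + 1)
              ≤ Real.exp zbar * Real.exp (y j * Real.log t - zbar) :=
                mul_le_mul_of_nonneg_left h2 (Real.exp_nonneg _)
            _ = Real.exp (y j * Real.log t) := by
                rw [← Real.exp_add]; ring_nf
        calc ((q:ℝ) - s) * Real.exp zbar
            = ∑ j ∈ K, Real.exp zbar * (y j * Real.log t - zbar + 1) := by
              rw [← Finset.mul_sum, Finset.sum_add_distrib, Finset.sum_sub_distrib,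
                hSyl, Finset.sum_const, Finset.sum_const, hKc, nsmul_eq_mul,
                nsmul_eq_mul, Nat.cast_sub hsq.le]
              push_cast
              ring
          _ ≤ ∑ j ∈ K, Real.exp (y j * Real.log t) := Finset.sum_le_sum h1
      have hlogt : Real.log t ≤ 0 := Real.log_nonpos ht0 ht1
      have hEbound : (((b:ℝ) - s) * ((q:ℝ) - b) / ((q:ℝ) - s)) * Real.log t ≤ zbar := by
        rw [hzbar, div_mul_eq_mul_div]
        rw [div_le_div_iff_of_pos_right hQS]
        exact mul_le_mul_of_nonpos_right hysum hlogt
      have hEeq : ((b:ℝ) - s) - ((b:ℝ) - s) ^ 2 / ((q:ℝ) - s) =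
          ((b:ℝ) - s) * ((q:ℝ) - b) / ((q:ℝ) - s) := by
        field_simp
        ring
      rw [ge_iff_le, hEeq, Real.rpow_def_of_pos ht]
      have hexp : Real.exp (Real.log t * (((b:ℝ) - s) * ((q:ℝ) - b) / ((q:ℝ) - s))) ≤
          Real.exp zbar := by
        apply Real.exp_le_exp.mpr
        rw [mul_comm]
        exact hEbound
      calc ((q:ℝ) - s) / ((q:ℝ) - 1) ^ b *
            Real.exp (Real.log t * (((b:ℝ) - s) * ((q:ℝ) - b) / ((q:ℝ) - s)))
          ≤ ((q:ℝ) - s) / ((q:ℝ) - 1) ^ b * Real.exp zbar := by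
            apply mul_le_mul_of_nonneg_left hexp
            positivity
        _ = c ^ (b - s) * c ^ s * (((q:ℝ) - s) * Real.exp zbar) := by
            rw [← pow_add, Nat.sub_add_cancel hs, hc_def, one_div_pow]
            ring
        _ ≤ c ^ (b - s) * c ^ s * ∑ j ∈ K, Real.exp (y j * Real.log t) :=
            mul_le_mul_of_nonneg_left hjensen (by positivity)
        _ = ∑ j ∈ K, (c ^ (b - s) * Real.exp (y j * Real.log t)) * c ^ s := by
            rw [Finset.mul_sum]
            apply Finset.sum_congr rfl
            intros
            ring
        _ ≤ ∑ j ∈ K, (∏ i ∈ F1, α i j) * c ^ s :=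
            Finset.sum_le_sum (fun j hj =>
              mul_le_mul_of_nonneg_right (hprodF1 j hj) (pow_nonneg hc.le s))
        _ = ∑ j ∈ K, ∏ i, α i j :=
            Finset.sum_congr rfl (fun j hj => (hsplit j hj).symm)
        _ ≤ ∑ j, ∏ i, α i j := hstep1
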